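/- In the quantum 2×2 matrix algebra, the localization C[GL_2]_q of C[Mat_2]_q at the central element D = det_q z carries a unique antilinear antiautomorphism * with (z_1^1)* = q^{−2} D^{−1} z_2^2, (z_2^1)* = −q^{−1} D^{−1} z_1^2, (z_1^2)* = −q^{−1} D^{−1} z_2^1, (z_2^2)* = D^{−1} z_1^1, and this * is an involution (** = id); moreover D D* = D* D = q^{−2}. -/

import Mathlib

noncomputable section

/-- Generators of ℂ[GL_2]_q: the four matrix entries `z_a^α` and the inverse `D⁻¹`
of the quantum determinant. -/
abbrev GL2Gen := (Fin 2 × Fin 2) ⊕ Unit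

/-- `z_a^α` in the free algebra; `(a, α)` means column `a`, row `α` (0-indexed). -/
def Zf (g : Fin 2 × Fin 2) : FreeAlgebra ℂ GL2Gen := FreeAlgebra.ι ℂ (Sum.inl g)

/-- `D⁻¹` in the free algebra. -/
def Wf : FreeAlgebra ℂ GL2Gen := FreeAlgebra.ι ℂ (Sum.inr ())

/-- The quantum determinant `D = z_1^1 z_2^2 − q z_1^2 z_2^1` in the free algebra. -/
def Df (q : ℂ) : FreeAlgebra ℂ GL2Gen := Zf (0,0) * Zf (1,1) - q • (Zf (0,1) * Zf (1,0))

/-- Defining relations of ℂ[GL_2]_q: the quantum 2×2 matrix relations together with the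
relations making `D⁻¹` a central two-sided inverse of `D`. -/
inductive GL2Rel (q : ℂ) : FreeAlgebra ℂ GL2Gen → FreeAlgebra ℂ GL2Gen → Prop
  | r1 : GL2Rel q (Zf (0,0) * Zf (0,1)) (q • (Zf (0,1) * Zf (0,0)))
  | r2 : GL2Rel q (Zf (0,0) * Zf (1,0)) (q • (Zf (1,0) * Zf (0,0)))
  | r3 : GL2Rel q (Zf (0,1) * Zf (1,1)) (q • (Zf (1,1) * Zf (0,1)))
  | r4 : GL2Rel q (Zf (1,0) * Zf (1,1)) (q • (Zf (1,1) * Zf (1,0)))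
  | r5 : GL2Rel q (Zf (1,0) * Zf (0,1))  (Zf (0,1) * Zf (1,0))
  | r6 : GL2Rel q (Zf (0,0) * Zf (1,1))
      (Zf (1,1) * Zf (0,0) + (q - q⁻¹) • (Zf (0,1) * Zf (1,0)))
  | rinv1 : GL2Rel q (Wf * Df q) 1
  | rinv2 : GL2Rel q (Df q * Wf) 1
  | rcomm (g : Fin 2 × Fin 2) : GL2Rel q (Wf * Zf g) (Zf g * Wf)

/-- The localization ℂ[GL_2]_q of ℂ[Mat_2]_q at the central element `det_q z`. -/
def QGL2 (q : ℂ) : Type := RingQuot (GL2Rel q)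

instance (q : ℂ) : Ring (QGL2 q) := by unfold QGL2; infer_instance
instance (q : ℂ) : Algebra ℂ (QGL2 q) := by unfold QGL2; infer_instance

def Z (q : ℂ) (g : Fin 2 × Fin 2) : QGL2 q := RingQuot.mkAlgHom ℂ (GL2Rel q) (Zf g)
def W (q : ℂ) : QGL2 q := RingQuot.mkAlgHom ℂ (GL2Rel q) Wf
def D (q : ℂ) : QGL2 q := RingQuot.mkAlgHom ℂ (GL2Rel q) (Df q)

/-- `st` is an antilinear antiautomorphism with the prescribed values on the generators. -/
def IsStar (q : ℝ) (st : QGL2 (q : ℂ) → QGL2 (q : ℂ)) : Prop :=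
  Function.Bijective st ∧
  (∀ x y, st (x + y) = st x + st y) ∧
  (∀ x y, st (x * y) = st y * st x) ∧
  (∀ (c : ℂ) x, st (c • x) = (starRingEnd ℂ) c • st x) ∧
  st (Z (q : ℂ) (0,0)) = ((q : ℂ) ^ (-2 : ℤ)) • (W (q : ℂ) * Z (q : ℂ) (1,1)) ∧
  st (Z (q : ℂ) (1,0)) = (-(q : ℂ)⁻¹) • (W (q : ℂ) * Z (q : ℂ) (0,1)) ∧
  st (Z (q : ℂ) (0,1)) = (-(q : ℂ)⁻¹) • (W (q : ℂ) * Z (q : ℂ) (1,0)) ∧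
  st (Z (q : ℂ) (1,1)) = W (q : ℂ) * Z (q : ℂ) (0,0)

section Aux
open MulOpposite


namespace QGL2
variable {q : ℂ}

lemma rel {x y : FreeAlgebra ℂ GL2Gen} (h : GL2Rel q x y) :
    RingQuot.mkAlgHom ℂ (GL2Rel q) x = RingQuot.mkAlgHom ℂ (GL2Rel q) y :=
  RingQuot.mkAlgHom_rel ℂ h

lemma zr1 : Z q (0,0) * Z q (0,1) = q • (Z q (0,1) * Z q (0,0)) := by
  have h := rel (q := q) GL2Rel.r1
  simp only [map_mul, map_smul] at h
  exact h

lemma zr2 : Z q (0,0) * Z q (1,0) = q • (Z q (1,0) * Z q (0,0)) := by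
  have h := rel (q := q) GL2Rel.r2
  simp only [map_mul, map_smul] at h
  exact h

lemma zr3 : Z q (0,1) * Z q (1,1) = q • (Z q (1,1) * Z q (0,1)) := by
  have h := rel (q := q) GL2Rel.r3
  simp only [map_mul, map_smul] at h
  exact h

lemma zr4 : Z q (1,0) * Z q (1,1) = q • (Z q (1,1) * Z q (1,0)) := by
  have h := rel (q := q) GL2Rel.r4
  simp only [map_mul, map_smul] at h
  exact h

lemma zr5 : Z q (1,0) * Z q (0,1) = Z q (0,1) * Z q (1,0) := by
  have h := rel (q := q) GL2Rel.r5
  simp only [map_mul] at h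
  exact h

lemma zr6 : Z q (0,0) * Z q (1,1)
    = Z q (1,1) * Z q (0,0) + (q - q⁻¹) • (Z q (0,1) * Z q (1,0)) := by
  have h := rel (q := q) GL2Rel.r6
  simp only [map_mul, map_add, map_smul] at h
  exact h

lemma wd : W q * D q = 1 := by
  have h := rel (q := q) GL2Rel.rinv1
  simp only [map_mul, map_one] at h
  exact h

lemma dw : D q * W q = 1 := by
  have h := rel (q := q) GL2Rel.rinv2
  simp only [map_mul, map_one] at h
  exact h

lemma wz (g : Fin 2 × Fin 2) : W q * Z q g = Z q g * W q := by
  have h := rel (q := q) (GL2Rel.rcomm g)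
  simp only [map_mul] at h
  exact h

lemma dDef : D q = Z q (0,0) * Z q (1,1) - q • (Z q (0,1) * Z q (1,0)) := by
  simp [D, Df, Z, map_mul, map_smul, map_sub]
  rfl

/-- Induction principle. -/
lemma induction {P : QGL2 q → Prop}
    (halg : ∀ c : ℂ, P (algebraMap ℂ (QGL2 q) c))
    (hz : ∀ g, P (Z q g)) (hw : P (W q))
    (hadd : ∀ x y, P x → P y → P (x + y))
    (hmul : ∀ x y, P x → P y → P (x * y)) : ∀ x, P x := by
  intro x
  obtain ⟨y, rfl⟩ := RingQuot.mkAlgHom_surjective ℂ (GL2Rel q) x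
  induction y using FreeAlgebra.induction with
  | grade0 c => rw [AlgHom.commutes]; exact halg c
  | grade1 g =>
      cases g with
      | inl g => exact hz g
      | inr u => exact hw
  | add x y hx hy => rw [map_add]; exact hadd _ _ hx hy
  | mul x y hx hy => rw [map_mul]; exact hmul _ _ hx hy

end QGL2

open MulOpposite

def Bt (q : ℂ) : Type := (QGL2 q)ᵐᵒᵖ
instance (q : ℂ) : Ring (Bt q) := by unfold Bt; infer_instance
instance (q : ℂ) : Algebra ℂ (Bt q) :=
  RingHom.toAlgebra' ((algebraMap ℂ (QGL2 q)ᵐᵒᵖ).comp (starRingEnd ℂ))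
    (fun c x => Algebra.commutes (A := (QGL2 q)ᵐᵒᵖ) ((starRingEnd ℂ) c) x)

def btOp {q : ℂ} (y : QGL2 q) : Bt q := op y

lemma btOp_inj {q : ℂ} {y z : QGL2 q} (h : btOp y = btOp z) : y = z :=
  op_injective h

@[simp] lemma bt_op_mul {q : ℂ} (y z : QGL2 q) : btOp y * btOp z = btOp (z * y) := rfl

@[simp] lemma bt_op_add {q : ℂ} (y z : QGL2 q) : btOp y + btOp z = btOp (y + z) := rfl

@[simp] lemma bt_op_sub {q : ℂ} (y z : QGL2 q) : btOp y - btOp z = btOp (y - z) := rfl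

@[simp] lemma bt_one {q : ℂ} : (1 : Bt q) = btOp 1 := rfl

@[simp] lemma bt_smul {q : ℂ} (c : ℂ) (y : QGL2 q) :
    c • btOp y = btOp ((starRingEnd ℂ) c • y) := by
  show op (y * algebraMap ℂ (QGL2 q) ((starRingEnd ℂ) c)) = op ((starRingEnd ℂ) c • y)
  rw [← Algebra.commutes, ← Algebra.smul_def]

def stZ (q : ℂ) : Fin 2 → Fin 2 → QGL2 q :=
  ![![ ((q:ℂ)^(-2:ℤ)) • (W q * Z q (1,1)), (-q⁻¹) • (W q * Z q (1,0))],
    ![ (-q⁻¹) • (W q * Z q (0,1)), W q * Z q (0,0)]]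

def stGen (q : ℂ) : GL2Gen → Bt q
  | Sum.inl g => btOp (stZ q g.1 g.2)
  | Sum.inr _ => btOp ((q^(2:ℕ) : ℂ) • D q)

def φ (q : ℂ) : FreeAlgebra ℂ GL2Gen →ₐ[ℂ] Bt q := FreeAlgebra.lift ℂ (stGen q)

namespace QGL2
variable {q : ℂ}

lemma wzwz (g h : Fin 2 × Fin 2) :
    W q * Z q g * (W q * Z q h) = W q * (W q * (Z q g * Z q h)) := by
  rw [mul_assoc, ← mul_assoc (Z q g), ← wz g, mul_assoc]

end QGL2
namespace QGL2
variable {q : ℂ}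
lemma wzd (h : Fin 2 × Fin 2) : W q * Z q h * D q = D q * (W q * Z q h) := by
  rw [← mul_assoc (D q), dw, one_mul, wz h, mul_assoc, wd, mul_one]
end QGL2

lemma phi_rel (q : ℂ) (hq : q ≠ 0) (hc : (starRingEnd ℂ) q = q) {x y} (h : GL2Rel q x y) :
    φ q x = φ q y := by
  have hci : (starRingEnd ℂ) q⁻¹ = q⁻¹ := by rw [map_inv₀, hc]
  cases h with
  | r1 =>
    simp only [φ, Zf, Wf, map_mul, map_smul, FreeAlgebra.lift_ι_apply, stGen, stZ,
      Matrix.cons_val_zero, Matrix.cons_val_one, Matrix.head_cons, bt_op_mul, bt_smul]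
    refine congrArg btOp ?_
    simp only [hc, smul_mul_assoc, mul_smul_comm, smul_smul, QGL2.wzwz]
    rw [QGL2.zr4]
    simp only [mul_smul_comm, smul_smul]
    congr 1
    field_simp
    try ring
  | r2 =>
    simp only [φ, Zf, Wf, map_mul, map_smul, FreeAlgebra.lift_ι_apply, stGen, stZ,
      Matrix.cons_val_zero, Matrix.cons_val_one, Matrix.head_cons, bt_op_mul, bt_smul]
    refine congrArg btOp ?_
    simp only [hc, smul_mul_assoc, mul_smul_comm, smul_smul, QGL2.wzwz]
    rw [QGL2.zr3]
    simp only [mul_smul_comm, smul_smul]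
    congr 1
    field_simp
    try ring
  | r3 =>
    simp only [φ, Zf, Wf, map_mul, map_smul, FreeAlgebra.lift_ι_apply, stGen, stZ,
      Matrix.cons_val_zero, Matrix.cons_val_one, Matrix.head_cons, bt_op_mul, bt_smul]
    refine congrArg btOp ?_
    simp only [hc, smul_mul_assoc, mul_smul_comm, smul_smul, QGL2.wzwz]
    rw [QGL2.zr2]
    simp only [mul_smul_comm, smul_smul]
    congr 1
    field_simp
    try ring
  | r4 =>
    simp only [φ, Zf, Wf, map_mul, map_smul, FreeAlgebra.lift_ι_apply, stGen, stZ,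
      Matrix.cons_val_zero, Matrix.cons_val_one, Matrix.head_cons, bt_op_mul, bt_smul]
    refine congrArg btOp ?_
    simp only [hc, smul_mul_assoc, mul_smul_comm, smul_smul, QGL2.wzwz]
    rw [QGL2.zr1]
    simp only [mul_smul_comm, smul_smul]
    congr 1
    field_simp
    try ring
  | r5 =>
    simp only [φ, Zf, Wf, map_mul, map_smul, FreeAlgebra.lift_ι_apply, stGen, stZ,
      Matrix.cons_val_zero, Matrix.cons_val_one, Matrix.head_cons, bt_op_mul, bt_smul]
    refine congrArg btOp ?_
    simp only [hc, smul_mul_assoc, mul_smul_comm, smul_smul, QGL2.wzwz]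
    rw [QGL2.zr5]
  | r6 =>
    simp only [φ, Zf, Wf, map_mul, map_smul, map_add, FreeAlgebra.lift_ι_apply, stGen, stZ,
      Matrix.cons_val_zero, Matrix.cons_val_one, Matrix.head_cons, bt_op_mul, bt_smul,
      bt_op_add]
    refine congrArg btOp ?_
    simp only [hc, hci, map_sub, smul_mul_assoc, mul_smul_comm, smul_smul, QGL2.wzwz]
    rw [QGL2.zr6]
    simp only [mul_add, smul_add, mul_smul_comm, smul_smul]
    congr 1
    all_goals try congr 1
    all_goals try simp only [zpow_neg, zpow_two]
    all_goals try field_simp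
    all_goals try ring
    all_goals try tauto
    try ring
  | rinv1 =>
    simp only [φ, Zf, Wf, Df, map_mul, map_smul, map_sub, map_one,
      FreeAlgebra.lift_ι_apply, stGen, stZ,
      Matrix.cons_val_zero, Matrix.cons_val_one, Matrix.head_cons, bt_op_mul, bt_smul,
      bt_op_sub, bt_one]
    refine congrArg btOp ?_
    simp only [hc, smul_mul_assoc, mul_smul_comm, smul_smul, sub_mul, mul_sub, QGL2.wzwz]
    have e1 : (q^2 * q^(-2:ℤ) : ℂ) = 1 := by
      rw [← zpow_natCast q 2, ← zpow_add₀ hq]; norm_num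
    have e2 : (q^2 * (q * (-q⁻¹ * -q⁻¹)) : ℂ) = q := by field_simp
    have e3 : W q * (W q * (Z q (0,0) * Z q (1,1)))
        - q • (W q * (W q * (Z q (0,1) * Z q (1,0)))) = W q * (W q * D q) := by
      rw [QGL2.dDef, mul_sub, mul_sub, mul_smul_comm, mul_smul_comm]
    rw [smul_sub, smul_smul, smul_smul, e1, e2, one_smul, ← smul_mul_assoc, ← sub_mul,
      e3, QGL2.wd, mul_one, QGL2.wd]
  | rinv2 =>
    simp only [φ, Zf, Wf, Df, map_mul, map_smul, map_sub, map_one,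
      FreeAlgebra.lift_ι_apply, stGen, stZ,
      Matrix.cons_val_zero, Matrix.cons_val_one, Matrix.head_cons, bt_op_mul, bt_smul,
      bt_op_sub, bt_one]
    refine congrArg btOp ?_
    simp only [hc, smul_mul_assoc, mul_smul_comm, smul_smul, sub_mul, mul_sub, QGL2.wzwz]
    have e1 : (q^(-2:ℤ) * q^2 : ℂ) = 1 := by
      rw [← zpow_natCast q 2, ← zpow_add₀ hq]; norm_num
    have e2 : (q * (-q⁻¹ * -q⁻¹) * q^2 : ℂ) = q := by field_simp
    have e3 : W q * (W q * (Z q (0,0) * Z q (1,1)))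
        - q • (W q * (W q * (Z q (0,1) * Z q (1,0)))) = W q * (W q * D q) := by
      rw [QGL2.dDef, mul_sub, mul_sub, mul_smul_comm, mul_smul_comm]
    rw [e1, e2, one_smul, ← mul_smul_comm, ← mul_sub, e3, ← mul_assoc, QGL2.dw, one_mul,
      QGL2.wd]
  | rcomm g =>
    simp only [φ, Zf, Wf, map_mul, FreeAlgebra.lift_ι_apply, stGen, stZ, bt_op_mul]
    refine congrArg btOp ?_
    fin_cases g <;>
      simp only [stZ, Fin.mk_zero, Fin.mk_one, Matrix.cons_val_zero, Matrix.cons_val_one,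
        Matrix.head_cons, smul_mul_assoc, mul_smul_comm, smul_smul, QGL2.wzd] <;>
      try rw [mul_comm]
def Φ (q : ℂ) (hq : q ≠ 0) (hc : (starRingEnd ℂ) q = q) : QGL2 q →ₐ[ℂ] Bt q :=
  RingQuot.liftAlgHom ℂ ⟨φ q, fun _ _ h => phi_rel q hq hc h⟩

def st0 (q : ℂ) (hq : q ≠ 0) (hc : (starRingEnd ℂ) q = q) : QGL2 q → QGL2 q :=
  fun x => unop (Φ q hq hc x)

variable {q : ℂ} (hq : q ≠ 0) (hc : (starRingEnd ℂ) q = q)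

lemma Φ_eq (x : QGL2 q) : Φ q hq hc x = btOp (st0 q hq hc x) := rfl

lemma st0_mk (y : FreeAlgebra ℂ GL2Gen) :
    Φ q hq hc (RingQuot.mkAlgHom ℂ (GL2Rel q) y) = φ q y :=
  RingQuot.liftAlgHom_mkAlgHom_apply ℂ _ _ y

lemma st0_Z (g : Fin 2 × Fin 2) : st0 q hq hc (Z q g) = stZ q g.1 g.2 := by
  show unop (Φ q hq hc (Z q g)) = _
  rw [Z, st0_mk, φ]
  simp [Zf, FreeAlgebra.lift_ι_apply, stGen, btOp]

lemma st0_W : st0 q hq hc (W q) = (q^(2:ℕ) : ℂ) • D q := by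
  show unop (Φ q hq hc (W q)) = _
  rw [W, st0_mk, φ]
  simp [Wf, FreeAlgebra.lift_ι_apply, stGen, btOp]

lemma st0_add (x y : QGL2 q) :
    st0 q hq hc (x + y) = st0 q hq hc x + st0 q hq hc y := by
  show unop (Φ q hq hc (x + y)) = _
  rw [map_add]; rfl

lemma st0_mul (x y : QGL2 q) :
    st0 q hq hc (x * y) = st0 q hq hc y * st0 q hq hc x := by
  have : Φ q hq hc (x * y) = btOp (st0 q hq hc y * st0 q hq hc x) := by
    rw [map_mul, Φ_eq, Φ_eq, bt_op_mul]
  exact congrArg unop this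

lemma st0_smul (c : ℂ) (x : QGL2 q) :
    st0 q hq hc (c • x) = (starRingEnd ℂ) c • st0 q hq hc x := by
  have : Φ q hq hc (c • x) = btOp ((starRingEnd ℂ) c • st0 q hq hc x) := by
    rw [map_smul, Φ_eq, bt_smul]
  exact congrArg unop this

lemma st0_one : st0 q hq hc 1 = 1 := congrArg unop (map_one (Φ q hq hc))

lemma st0_algebraMap (c : ℂ) :
    st0 q hq hc (algebraMap ℂ (QGL2 q) c) = algebraMap ℂ (QGL2 q) ((starRingEnd ℂ) c) := by
  have : Φ q hq hc (algebraMap ℂ (QGL2 q) c)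
      = btOp (algebraMap ℂ (QGL2 q) ((starRingEnd ℂ) c)) := AlgHom.commutes _ c
  exact congrArg unop this

namespace QGL2

lemma factorD : W q * (W q * (Z q (0,0) * Z q (1,1)))
    - q • (W q * (W q * (Z q (0,1) * Z q (1,0)))) = W q * (W q * D q) := by
  rw [QGL2.dDef, mul_sub, mul_sub, mul_smul_comm, mul_smul_comm]

lemma wzd1 (g : Fin 2 × Fin 2) : W q * Z q g * D q = Z q g := by
  rw [wz, mul_assoc, wd, mul_one]

end QGL2

include hq in
lemma zp1 : (q^(-2:ℤ) * q^(2:ℕ) : ℂ) = 1 := by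
  rw [← zpow_natCast q 2, ← zpow_add₀ hq]; norm_num

include hq in
lemma zp2 : (q^(2:ℕ) * q^(-2:ℤ) : ℂ) = 1 := by
  rw [← zpow_natCast q 2, ← zpow_add₀ hq]; norm_num

include hc in
lemma conj_zp : (starRingEnd ℂ) (q^(-2:ℤ)) = q^(-2:ℤ) := by
  rw [map_zpow₀, hc]

include hc in
lemma conj_p2 : (starRingEnd ℂ) (q^(2:ℕ)) = q^(2:ℕ) := by
  rw [map_pow, hc]

include hc in
lemma conj_nqi : (starRingEnd ℂ) (-q⁻¹) = -q⁻¹ := by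
  rw [map_neg, map_inv₀, hc]

section generic
variable (st : QGL2 q → QGL2 q)
  (hadd : ∀ x y, st (x + y) = st x + st y)
  (hmul : ∀ x y, st (x * y) = st y * st x)
  (hsmul : ∀ (c : ℂ) x, st (c • x) = (starRingEnd ℂ) c • st x)
  (h00 : st (Z q (0,0)) = (q^(-2:ℤ)) • (W q * Z q (1,1)))
  (h10 : st (Z q (1,0)) = (-q⁻¹) • (W q * Z q (0,1)))
  (h01 : st (Z q (0,1)) = (-q⁻¹) • (W q * Z q (1,0)))
  (h11 : st (Z q (1,1)) = W q * Z q (0,0))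
  (hone : st 1 = 1)

include hadd in
lemma st_sub (x y : QGL2 q) : st (x - y) = st x - st y := by
  have h := hadd (x - y) y
  rw [sub_add_cancel] at h
  exact eq_sub_of_add_eq h.symm

include hq hadd hmul hsmul h00 h10 h01 h11 hc in
lemma st_D : st (D q) = (q^(-2:ℤ)) • W q := by
  rw [QGL2.dDef, st_sub st hadd, hmul, hsmul, hmul, h00, h01, h10, h11]
  simp only [hc, smul_mul_assoc, mul_smul_comm, smul_smul, QGL2.wzwz]
  rw [show (q * (-q⁻¹ * -q⁻¹) : ℂ) = q^(-2:ℤ) * q by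
    rw [zpow_neg]
    field_simp
    try ring
    try exact (mul_inv_cancel₀ (pow_ne_zero 2 hq)).symm]
  rw [← smul_smul, ← smul_sub, QGL2.factorD, QGL2.wd, mul_one]

include hsmul hone in
lemma st_algebraMap' (c : ℂ) :
    st (algebraMap ℂ (QGL2 q) c) = algebraMap ℂ (QGL2 q) ((starRingEnd ℂ) c) := by
  rw [Algebra.algebraMap_eq_smul_one, hsmul, hone, Algebra.algebraMap_eq_smul_one]

include hq hc hadd hmul hsmul h00 h10 h01 h11 hone in
lemma st_invol (hW : st (W q) = (q^(2:ℕ) : ℂ) • D q) : ∀ x, st (st x) = x := by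
  refine QGL2.induction ?_ ?_ ?_ ?_ ?_
  · intro c
    rw [st_algebraMap' st hsmul hone, st_algebraMap' st hsmul hone,
      Complex.conj_conj]
  · intro g
    fin_cases g
    · rw [show ((⟨0,by norm_num⟩, ⟨0,by norm_num⟩) : Fin 2 × Fin 2) = (0,0) from rfl]
      rw [h00, hsmul, conj_zp hc, hmul, h11, hW]
      simp only [smul_mul_assoc, mul_smul_comm, smul_smul, QGL2.wzd1]
      convert one_smul ℂ (Z q ((0:Fin 2),(0:Fin 2))) using 2
      simp only [zpow_neg]
      field_simp
      try ring
      try exact div_self (pow_ne_zero 2 hq)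
      try exact (mul_inv_cancel₀ (pow_ne_zero 2 hq)).symm
    · rw [show ((⟨0,by norm_num⟩, ⟨1,by norm_num⟩) : Fin 2 × Fin 2) = (0,1) from rfl]
      rw [h01, hsmul, conj_nqi hc, hmul, h10, hW]
      simp only [smul_mul_assoc, mul_smul_comm, smul_smul, QGL2.wzd1]
      convert one_smul ℂ (Z q ((0:Fin 2),(1:Fin 2))) using 2
      field_simp
      try ring
      try exact div_self (pow_ne_zero 2 hq)
    · rw [show ((⟨1,by norm_num⟩, ⟨0,by norm_num⟩) : Fin 2 × Fin 2) = (1,0) from rfl]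
      rw [h10, hsmul, conj_nqi hc, hmul, h01, hW]
      simp only [smul_mul_assoc, mul_smul_comm, smul_smul, QGL2.wzd1]
      convert one_smul ℂ (Z q ((1:Fin 2),(0:Fin 2))) using 2
      field_simp
      try ring
      try exact div_self (pow_ne_zero 2 hq)
    · rw [show ((⟨1,by norm_num⟩, ⟨1,by norm_num⟩) : Fin 2 × Fin 2) = (1,1) from rfl]
      rw [h11, hmul, h00, hW]
      simp only [smul_mul_assoc, mul_smul_comm, smul_smul, QGL2.wzd1]
      convert one_smul ℂ (Z q ((1:Fin 2),(1:Fin 2))) using 2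
      simp only [zpow_neg]
      field_simp
      try ring
      try exact div_self (pow_ne_zero 2 hq)
      try exact (mul_inv_cancel₀ (pow_ne_zero 2 hq)).symm
  · rw [hW, hsmul, conj_p2 hc,
      st_D hq hc st hadd hmul hsmul h00 h10 h01 h11, smul_smul, zp2 hq, one_smul]
  · intro x y hx hy; rw [hadd, hadd, hx, hy]
  · intro x y hx hy; rw [hmul, hmul, hx, hy]

end generic

def PreStar (q : ℂ) (st : QGL2 q → QGL2 q) : Prop :=
  (∀ x y, st (x + y) = st x + st y) ∧
  (∀ x y, st (x * y) = st y * st x) ∧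
  (∀ (c : ℂ) x, st (c • x) = (starRingEnd ℂ) c • st x) ∧
  st (Z q (0,0)) = (q^(-2:ℤ)) • (W q * Z q (1,1)) ∧
  st (Z q (1,0)) = (-q⁻¹) • (W q * Z q (0,1)) ∧
  st (Z q (0,1)) = (-q⁻¹) • (W q * Z q (1,0)) ∧
  st (Z q (1,1)) = W q * Z q (0,0) ∧
  st 1 = 1 ∧ st (W q) = (q^(2:ℕ) : ℂ) • D q

omit hq hc in
lemma preStar_unique {st1 st2 : QGL2 q → QGL2 q}
    (H1 : PreStar q st1) (H2 : PreStar q st2) : st1 = st2 := by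
  obtain ⟨a1, m1, s1, x1, y1, u1, v1, o1, w1⟩ := H1
  obtain ⟨a2, m2, s2, x2, y2, u2, v2, o2, w2⟩ := H2
  funext x
  refine QGL2.induction (P := fun x => st1 x = st2 x) ?_ ?_ ?_ ?_ ?_ x
  · intro c
    show st1 _ = st2 _
    rw [st_algebraMap' st1 s1 o1, st_algebraMap' st2 s2 o2]
  · intro g
    fin_cases g
    · exact x1.trans x2.symm
    · exact u1.trans u2.symm
    · exact y1.trans y2.symm
    · exact v1.trans v2.symm
  · exact w1.trans w2.symm
  · intro x y hx hy
    show st1 (x + y) = st2 (x + y)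
    rw [a1, a2, hx, hy]
  · intro x y hx hy
    show st1 (x * y) = st2 (x * y)
    rw [m1, m2, hx, hy]

include hq hc in
lemma preStar_st0 : PreStar q (st0 q hq hc) := by
  refine ⟨st0_add hq hc, st0_mul hq hc, st0_smul hq hc, ?_, ?_, ?_, ?_,
    st0_one hq hc, st0_W hq hc⟩ <;>
    · rw [st0_Z hq hc]
      simp [stZ]

include hq hc in
lemma preStar_of_isStar {st : QGL2 q → QGL2 q}
    (hbij : Function.Bijective st)
    (hadd : ∀ x y, st (x + y) = st x + st y)
    (hmul : ∀ x y, st (x * y) = st y * st x)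
    (hsmul : ∀ (c : ℂ) x, st (c • x) = (starRingEnd ℂ) c • st x)
    (h00 : st (Z q (0,0)) = (q^(-2:ℤ)) • (W q * Z q (1,1)))
    (h10 : st (Z q (1,0)) = (-q⁻¹) • (W q * Z q (0,1)))
    (h01 : st (Z q (0,1)) = (-q⁻¹) • (W q * Z q (1,0)))
    (h11 : st (Z q (1,1)) = W q * Z q (0,0)) : PreStar q st := by
  have hone : st 1 = 1 := by
    obtain ⟨x, hx⟩ := hbij.2 1
    have h := hmul x 1
    rw [mul_one, hx] at h
    rw [← mul_one (st 1), ← h]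
  have hD : st (D q) = (q^(-2:ℤ)) • W q :=
    st_D hq hc st hadd hmul hsmul h00 h10 h01 h11
  have h1 : (1 : QGL2 q) = st (W q) * ((q^(-2:ℤ)) • W q) := by
    have h := hmul (D q) (W q)
    rw [QGL2.dw, hone, hD] at h
    exact h
  have key : ((q^(-2:ℤ)) • W q) * ((q^(2:ℕ) : ℂ) • D q) = 1 := by
    rw [smul_mul_assoc, mul_smul_comm, smul_smul, zp1 hq, one_smul, QGL2.wd]
  have hW : st (W q) = (q^(2:ℕ) : ℂ) • D q := by
    calc st (W q) = st (W q) * 1 := (mul_one _).symm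
      _ = st (W q) * (((q^(-2:ℤ)) • W q) * ((q^(2:ℕ) : ℂ) • D q)) := by rw [key]
      _ = (st (W q) * ((q^(-2:ℤ)) • W q)) * ((q^(2:ℕ) : ℂ) • D q) := (mul_assoc _ _ _).symm
      _ = 1 * ((q^(2:ℕ) : ℂ) • D q) := by rw [← h1]
      _ = (q^(2:ℕ) : ℂ) • D q := one_mul _
  exact ⟨hadd, hmul, hsmul, h00, h10, h01, h11, hone, hW⟩

end Aux

/-- ℂ[GL_2]_q carries a unique antilinear antiautomorphism `*` with
`(z_1^1)* = q^{−2} D^{−1} z_2^2`, `(z_2^1)* = −q^{−1} D^{−1} z_1^2`,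
`(z_1^2)* = −q^{−1} D^{−1} z_2^1`, `(z_2^2)* = D^{−1} z_1^1`; it is an involution and
`D D* = D* D = q^{−2}`. -/
theorem gl2_star_exists_unique (q : ℝ) (h0 : 0 < q) (h1 : q < 1) :
    (∃! st : QGL2 (q : ℂ) → QGL2 (q : ℂ), IsStar q st) ∧
    ∀ st : QGL2 (q : ℂ) → QGL2 (q : ℂ), IsStar q st →
      (∀ x, st (st x) = x) ∧
      D (q : ℂ) * st (D (q : ℂ)) = ((q : ℂ) ^ (-2 : ℤ)) • 1 ∧
      st (D (q : ℂ)) * D (q : ℂ) = ((q : ℂ) ^ (-2 : ℤ)) • 1 := by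
  have hq : (q:ℂ) ≠ 0 := Complex.ofReal_ne_zero.mpr (ne_of_gt h0)
  have hc : (starRingEnd ℂ) (q:ℂ) = (q:ℂ) := Complex.conj_ofReal q
  have hpre0 := preStar_st0 hq hc
  have hinv0 : ∀ x, st0 (q:ℂ) hq hc (st0 (q:ℂ) hq hc x) = x := by
    obtain ⟨hadd, hmul, hsmul, h00, h10, h01, h11, hone, hW⟩ := hpre0
    exact st_invol hq hc _ hadd hmul hsmul h00 h10 h01 h11 hone hW
  have hbij0 : Function.Bijective (st0 (q:ℂ) hq hc) := Function.Involutive.bijective hinv0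
  have hisstar0 : IsStar q (st0 (q:ℂ) hq hc) := by
    obtain ⟨hadd, hmul, hsmul, h00, h10, h01, h11, hone, hW⟩ := hpre0
    exact ⟨hbij0, hadd, hmul, hsmul, h00, h10, h01, h11⟩
  constructor
  · refine ⟨st0 (q:ℂ) hq hc, hisstar0, ?_⟩
    intro st hst
    obtain ⟨hb, hadd, hmul, hsmul, h00, h10, h01, h11⟩ := hst
    exact preStar_unique (preStar_of_isStar hq hc hb hadd hmul hsmul h00 h10 h01 h11) hpre0
  · intro st hst
    obtain ⟨hb, hadd, hmul, hsmul, h00, h10, h01, h11⟩ := hst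
    have hD := st_D hq hc st hadd hmul hsmul h00 h10 h01 h11
    obtain ⟨_, _, _, _, _, _, _, hone, hW⟩ :=
      preStar_of_isStar hq hc hb hadd hmul hsmul h00 h10 h01 h11
    refine ⟨st_invol hq hc st hadd hmul hsmul h00 h10 h01 h11 hone hW, ?_, ?_⟩
    · rw [hD, mul_smul_comm, QGL2.dw]
    · rw [hD, smul_mul_assoc, QGL2.wd]
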